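/- If X is a regular simplicial set of dimension q (every simplex of degree > q is degenerate), then the internal hom Hom(Δ^n, X) has dimension at most (n+1)·q: every simplex of Hom(Δ^n, X) of degree greater than (n+1)·q is degenerate. -/

import Mathlib

open CategoryTheory Simplicial MonoidalCategory SSet Limits

universe u v

/-- A simplex is degenerate if it is the image of a degeneracy map. -/
def SDeg (X : SSet.{u}) : ∀ {n : ℕ}, X _⦋n⦌ → Prop := fun {n} x => match n, x with
  | 0, _ => False
  | n + 1, x => ∃ (i : Fin (n + 1)) (y : X _⦋n⦌), x = X.map (SimplexCategory.σ i).op y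

/-- The `i`-th elementary edge `X(φ(i,i+1))(x)` of a `p`-simplex `x`. -/
def elemEdge (X : SSet.{u}) {p : ℕ} (x : X _⦋p⦌) (i : Fin p) : X _⦋1⦌ :=
  X.map (SimplexCategory.mkOfLe i.castSucc i.succ (Fin.castSucc_lt_succ (i := i)).le).op x

/-- A simplicial set is regular (property `P_1`) if any simplex with a degenerate
`i`-th elementary edge is an `i`-th degeneracy. -/
def SReg (X : SSet.{u}) : Prop :=
  ∀ (p : ℕ) (x : X _⦋p + 1⦌) (i : Fin (p + 1)),
    SDeg X (elemEdge X x i) → ∃ y : X _⦋p⦌, x = X.map (SimplexCategory.σ i).op y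

/-- The internal hom of simplicial sets: its `p`-simplices are the
simplicial maps `Δ[p] ⊗ U ⟶ X`. -/
noncomputable def sHom (U X : SSet.{u}) : SSet.{u} where
  obj m := SSet.stdSimplex.obj m.unop ⊗ U ⟶ X
  map φ := TypeCat.ofHom fun f => (SSet.stdSimplex.map φ.unop ▷ U) ≫ f
  map_id m := by
    apply ConcreteCategory.hom_ext; intro f
    simp only [unop_id]; rw [(SSet.stdSimplex).map_id]; simp
  map_comp φ ψ := by
    apply ConcreteCategory.hom_ext; intro f
    simp only [unop_comp]
    rw [(SSet.stdSimplex).map_comp]; simp [MonoidalCategory.comp_whiskerRight]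

section Aux
open SimplexCategory Opposite

-- val lemmas
lemma sigma_val {m : ℕ} (k : Fin (m+1)) (t : Fin (m+2)) :
    (((SimplexCategory.σ k).toOrderHom t) : ℕ) = if (t:ℕ) ≤ (k:ℕ) then (t:ℕ) else (t:ℕ) - 1 := by
  show ((k.predAbove t : Fin (m+1)) : ℕ) = _
  rcases le_or_gt t k.castSucc with h | h
  · rw [Fin.predAbove_of_le_castSucc _ _ h, Fin.coe_castPred]
    rw [Fin.le_def] at h; simp only [Fin.coe_castSucc] at h
    rw [if_pos h]
  · rw [Fin.predAbove_of_castSucc_lt _ _ h, Fin.coe_pred]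
    rw [Fin.lt_def] at h; simp only [Fin.coe_castSucc] at h
    rw [if_neg (by omega)]

lemma delta_val {m : ℕ} (k : Fin (m+2)) (t : Fin (m+1)) :
    (((SimplexCategory.δ k).toOrderHom t) : ℕ) = if (t:ℕ) < (k:ℕ) then (t:ℕ) else (t:ℕ) + 1 := by
  show ((k.succAbove t : Fin (m+2)) : ℕ) = _
  rcases lt_or_ge t.castSucc k with h | h
  · rw [Fin.succAbove_of_castSucc_lt _ _ h, Fin.coe_castSucc]
    rw [Fin.lt_def] at h; simp only [Fin.coe_castSucc] at h
    rw [if_pos h]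
  · rw [Fin.succAbove_of_le_castSucc _ _ h, Fin.val_succ]
    rw [Fin.le_def] at h; simp only [Fin.coe_castSucc] at h
    rw [if_neg (by omega)]

lemma mkOfLe_val0 {m : ℕ} (a b : Fin (m+1)) (h : a ≤ b) :
    (SimplexCategory.mkOfLe a b h).toOrderHom 0 = a := rfl

lemma mkOfLe_val1 {m : ℕ} (a b : Fin (m+1)) (h : a ≤ b) :
    (SimplexCategory.mkOfLe a b h).toOrderHom 1 = b := rfl

-- any [1]-hom with equal values gives degenerate simplex
lemma sdeg_of_comp_sigma {X : SSet.{u}} {k m : ℕ} (j : Fin (k+1)) (h' : ⦋k⦌ ⟶ ⦋m⦌)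
    (x : X _⦋m⦌) : SDeg X (X.map (SimplexCategory.σ j ≫ h').op x) :=
  ⟨j, X.map h'.op x, by rw [op_comp, FunctorToTypes.map_comp_apply]⟩

lemma sdeg_edge_of_eq {X : SSet.{u}} {m : ℕ} (g : ⦋1⦌ ⟶ ⦋m⦌)
    (hg : g.toOrderHom 0 = g.toOrderHom 1) (x : X _⦋m⦌) : SDeg X (X.map g.op x) := by
  have : g = SimplexCategory.σ (0 : Fin 1) ≫ SimplexCategory.const ⦋0⦌ ⦋m⦌ (g.toOrderHom 0) := by
    apply SimplexCategory.Hom.ext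
    apply OrderHom.ext; funext t
    fin_cases t
    · rfl
    · exact hg.symm
  rw [this]; exact sdeg_of_comp_sigma _ _ _

lemma toOrderHom_comp_apply {a b c : SimplexCategory} (f : a ⟶ b) (g : b ⟶ c)
    (t : Fin (a.len + 1)) : (f ≫ g).toOrderHom t = g.toOrderHom (f.toOrderHom t) := rfl

lemma hom1_ext {m : ℕ} (g h : ⦋1⦌ ⟶ ⦋m⦌)
    (h0 : g.toOrderHom 0 = h.toOrderHom 0) (h1 : g.toOrderHom 1 = h.toOrderHom 1) : g = h := by
  apply SimplexCategory.Hom.ext; apply OrderHom.ext; funext t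
  fin_cases t <;> assumption

lemma elemEdge_map (X : SSet.{u}) {m m' : ℕ} (g : ⦋m⦌ ⟶ ⦋m'⦌) (y : X _⦋m'⦌)
    (i : Fin m) :
    elemEdge X (X.map g.op y) i =
      X.map (SimplexCategory.mkOfLe i.castSucc i.succ (Fin.castSucc_lt_succ (i := i)).le ≫ g).op y := by
  unfold elemEdge
  rw [op_comp, FunctorToTypes.map_comp_apply]

open Classical in
noncomputable def badSet (X : SSet.{u}) {m : ℕ} (x : X _⦋m⦌) : Finset (Fin m) :=
  Finset.univ.filter (fun i => ¬ SDeg X (elemEdge X x i))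

lemma mem_badSet {X : SSet.{u}} {m : ℕ} {x : X _⦋m⦌} {i : Fin m} :
    i ∈ badSet X x ↔ ¬ SDeg X (elemEdge X x i) := by
  classical
  simp [badSet]

lemma badSet_card_le (X : SSet.{u}) (q : ℕ)
    (hq : ∀ (m : ℕ) (x : X _⦋m + 1⦌), q < m + 1 → SDeg X x) :
    ∀ (m : ℕ) (x : X _⦋m⦌), (badSet X x).card ≤ q := by
  intro m
  induction m using Nat.strong_induction_on with
  | _ m IH =>
  intro x
  by_cases hm : m ≤ q
  · calc (badSet X x).card ≤ Fintype.card (Fin m) := Finset.card_le_univ _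
      _ = m := by simp
      _ ≤ q := hm
  · obtain ⟨m', rfl⟩ : ∃ m', m = m' + 1 := ⟨m - 1, by omega⟩
    obtain ⟨k, y, hxy⟩ := hq m' x (by omega)
    subst hxy
    set ψ : Fin m' → Fin (m' + 1) := fun j => if (j:ℕ) < (k:ℕ) then j.castSucc else j.succ with hψ
    have hsub : badSet X (X.map (SimplexCategory.σ k).op y) ⊆ Finset.image ψ (badSet X y) := by
      intro i hi
      rw [mem_badSet] at hi
      have hik : (i:ℕ) ≠ (k:ℕ) := by
        intro hc
        apply hi
        rw [elemEdge_map]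
        apply sdeg_edge_of_eq
        apply Fin.ext
        rw [toOrderHom_comp_apply, toOrderHom_comp_apply, mkOfLe_val0, mkOfLe_val1,
          sigma_val, sigma_val]
        simp only [Fin.coe_castSucc, Fin.val_succ]
        split_ifs <;> omega
      have hi' : (i:ℕ) ≤ m' := by omega
      have hk' : (k:ℕ) ≤ m' := by omega
      rcases Nat.lt_or_ge (i:ℕ) (k:ℕ) with hcase | hcase
      · refine Finset.mem_image.2 ⟨⟨(i:ℕ), by omega⟩, ?_, ?_⟩
        · rw [mem_badSet]
          intro hdeg
          apply hi
          rw [elemEdge_map]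
          have he : SimplexCategory.mkOfLe i.castSucc i.succ (Fin.castSucc_lt_succ (i := i)).le ≫
              SimplexCategory.σ k =
              SimplexCategory.mkOfLe (⟨(i:ℕ), by omega⟩ : Fin m').castSucc
                (⟨(i:ℕ), by omega⟩ : Fin m').succ (Fin.castSucc_lt_succ (i := _)).le := by
            apply hom1_ext <;> apply Fin.ext <;>
              rw [toOrderHom_comp_apply] <;>
              simp only [mkOfLe_val0, mkOfLe_val1, sigma_val, Fin.coe_castSucc, Fin.val_succ] <;>
              split_ifs <;> (try simp) <;> omega
          rw [he]
          exact hdeg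
        · apply Fin.ext
          simp only [hψ]
          rw [if_pos (by exact hcase)]
          rfl
      · have hki : (k:ℕ) < (i:ℕ) := by omega
        refine Finset.mem_image.2 ⟨⟨(i:ℕ) - 1, by omega⟩, ?_, ?_⟩
        · rw [mem_badSet]
          intro hdeg
          apply hi
          rw [elemEdge_map]
          have he : SimplexCategory.mkOfLe i.castSucc i.succ (Fin.castSucc_lt_succ (i := i)).le ≫
              SimplexCategory.σ k =
              SimplexCategory.mkOfLe (⟨(i:ℕ) - 1, by omega⟩ : Fin m').castSucc
                (⟨(i:ℕ) - 1, by omega⟩ : Fin m').succ (Fin.castSucc_lt_succ (i := _)).le := by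
            apply hom1_ext <;> apply Fin.ext <;>
              rw [toOrderHom_comp_apply] <;>
              simp only [mkOfLe_val0, mkOfLe_val1, sigma_val, Fin.coe_castSucc, Fin.val_succ] <;>
              split_ifs <;> (try simp) <;> omega
          rw [he]
          exact hdeg
        · apply Fin.ext
          simp only [hψ]
          rw [if_neg (by omega)]
          show (i:ℕ) - 1 + 1 = (i:ℕ)
          omega
    calc (badSet X (X.map (SimplexCategory.σ k).op y)).card
        ≤ (Finset.image ψ (badSet X y)).card := Finset.card_le_card hsub
      _ ≤ (badSet X y).card := Finset.card_image_le
      _ ≤ q := IH m' (by omega) y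
def Fap {p n : ℕ} (X : SSet.{u}) (f : Δ[p] ⊗ Δ[n] ⟶ X) {m : ℕ}
    (α : ⦋m⦌ ⟶ ⦋p⦌) (β : ⦋m⦌ ⟶ ⦋n⦌) : X _⦋m⦌ :=
  f.app (op ⦋m⦌) ((SSet.stdSimplex.objEquiv (m := op ⦋m⦌)).symm α, (SSet.stdSimplex.objEquiv (m := op ⦋m⦌)).symm β)

lemma Fap_natural {p n : ℕ} (X : SSet.{u}) (f : Δ[p] ⊗ Δ[n] ⟶ X) {m m' : ℕ}
    (g : ⦋m'⦌ ⟶ ⦋m⦌) (α : ⦋m⦌ ⟶ ⦋p⦌)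
    (β : ⦋m⦌ ⟶ ⦋n⦌) :
    Fap X f (g ≫ α) (g ≫ β) = X.map g.op (Fap X f α β) :=
  FunctorToTypes.naturality (F := Δ[p] ⊗ Δ[n]) (G := X) f g.op
    (((SSet.stdSimplex.objEquiv (m := op ⦋m⦌)).symm α, (SSet.stdSimplex.objEquiv (m := op ⦋m⦌)).symm β) :
      (Δ[p] ⊗ Δ[n]) _⦋m⦌)

set_option maxHeartbeats 1600000 in
lemma key (X : SSet.{u}) (hX : SReg X) {p n : ℕ} (f : Δ[p+1] ⊗ Δ[n] ⟶ X) (i : Fin (p+1))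
    (H : ∀ j : Fin (n+1), SDeg X (Fap X f
      (SimplexCategory.mkOfLe i.castSucc i.succ (Fin.castSucc_lt_succ (i := i)).le)
      (SimplexCategory.const ⦋1⦌ ⦋n⦌ j)))
    (m : ℕ) (α : ⦋m⦌ ⟶ ⦋p+1⦌) (β : ⦋m⦌ ⟶ ⦋n⦌) :
    Fap X f (α ≫ (SimplexCategory.σ i ≫ SimplexCategory.δ i.succ)) β = Fap X f α β := by
  classical
  have r_val : ∀ t : Fin (p+2),
      (((SimplexCategory.σ i ≫ SimplexCategory.δ i.succ).toOrderHom t) : ℕ) =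
        if (t:ℕ) = (i:ℕ) + 1 then (i:ℕ) else (t:ℕ) := by
    intro t
    rw [toOrderHom_comp_apply, delta_val, sigma_val]
    simp only [Fin.val_succ]
    split_ifs <;> omega
  suffices h : ∀ (c : ℕ) (α : ⦋m⦌ ⟶ ⦋p+1⦌),
      (Finset.univ.filter (fun k : Fin (m+1) => α.toOrderHom k = i.succ)).card = c →
      Fap X f (α ≫ (SimplexCategory.σ i ≫ SimplexCategory.δ i.succ)) β = Fap X f α β by
    exact h _ α rfl
  intro c
  induction c using Nat.strong_induction_on with
  | _ c IH =>
  intro α hc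
  rcases Nat.eq_zero_or_pos c with hc0 | hc0
  · -- no occurrence of i.succ : α ≫ r = α
    subst hc0
    have hempty := Finset.card_eq_zero.1 hc
    have hno : ∀ k : Fin (m+1), α.toOrderHom k ≠ i.succ := by
      intro k hk
      have : k ∈ Finset.univ.filter (fun k : Fin (m+1) => α.toOrderHom k = i.succ) :=
        Finset.mem_filter.2 ⟨Finset.mem_univ _, hk⟩
      rw [hempty] at this
      exact absurd this (Finset.notMem_empty _)
    have : α ≫ (SimplexCategory.σ i ≫ SimplexCategory.δ i.succ) = α := by
      apply SimplexCategory.Hom.ext; apply OrderHom.ext; funext k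
      apply Fin.ext
      rw [toOrderHom_comp_apply, r_val]
      rw [if_neg]
      intro hv
      exact hno k (Fin.ext (by rw [hv, Fin.val_succ]))
    rw [this]
  · -- there is an occurrence; collapse the first one
    set S := Finset.univ.filter (fun k : Fin (m+1) => α.toOrderHom k = i.succ) with hS
    have hSne : S.Nonempty := Finset.card_pos.1 (by omega)
    set a := S.min' hSne with ha
    have ha_mem : α.toOrderHom a = i.succ := by
      have h := S.min'_mem hSne
      rw [ha]
      exact (Finset.mem_filter.1 h).2
    have ha_min : ∀ t : Fin (m+1), (t:ℕ) < (a:ℕ) → α.toOrderHom t ≠ i.succ := by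
      intro t ht hcon
      have htS : t ∈ S := Finset.mem_filter.2 ⟨Finset.mem_univ _, hcon⟩
      have := S.min'_le t htS
      rw [← ha] at this
      exact absurd (Fin.le_def.1 this) (by omega)
    -- the order hom of σ a ≫ α
    have pred_val : ∀ t : Fin (m+2), ((a.predAbove t : Fin (m+1)) : ℕ) =
        if (t:ℕ) ≤ (a:ℕ) then (t:ℕ) else (t:ℕ) - 1 := fun t => sigma_val a t
    have w_lt : ∀ t : Fin (m+2), (t:ℕ) < (a:ℕ) →
        ((α.toOrderHom (a.predAbove t) : Fin (p+2)) : ℕ) ≤ (i:ℕ) := by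
      intro t ht
      have h1 : a.predAbove t ≤ a := by
        rw [Fin.le_def, pred_val]
        split_ifs <;> omega
      have h2 : (a.predAbove t : ℕ) < (a:ℕ) := by rw [pred_val]; split_ifs <;> omega
      have h3 := α.toOrderHom.monotone h1
      rw [ha_mem, Fin.le_def, Fin.val_succ] at h3
      have h4 := ha_min _ h2
      have h5 : ((α.toOrderHom (a.predAbove t)) : ℕ) ≠ (i:ℕ) + 1 := by
        intro hcon
        exact h4 (Fin.ext (by rw [hcon, Fin.val_succ]))
      omega
    have w_eq : α.toOrderHom (a.predAbove a.castSucc) = i.succ := by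
      have : a.predAbove a.castSucc = a := by
        apply Fin.ext; rw [pred_val]; simp
      rw [this, ha_mem]
    have w_gt : ∀ t : Fin (m+2), (a:ℕ) < (t:ℕ) →
        (i:ℕ) + 1 ≤ ((α.toOrderHom (a.predAbove t) : Fin (p+2)) : ℕ) := by
      intro t ht
      have h1 : a ≤ a.predAbove t := by
        rw [Fin.le_def, pred_val]
        split_ifs <;> omega
      have h3 := α.toOrderHom.monotone h1
      rw [ha_mem] at h3
      rw [Fin.le_def, Fin.val_succ] at h3
      omega
    -- the inserted map α'
    have humono : Monotone (fun t : Fin (m+2) =>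
        if t = a.castSucc then i.castSucc else α.toOrderHom (a.predAbove t)) := by
      intro k l hkl
      dsimp only
      by_cases hk : k = a.castSucc <;> by_cases hl : l = a.castSucc
      · rw [hk, hl]
      · rw [if_pos hk, if_neg hl]
        have hkl' : (a:ℕ) < (l:ℕ) := by
          subst hk
          rcases lt_or_eq_of_le hkl with h | h
          · rw [Fin.lt_def] at h; simpa using h
          · exact absurd h.symm hl
        have := w_gt l hkl'
        rw [Fin.le_def]
        simp only [Fin.coe_castSucc]
        omega
      · rw [if_neg hk, if_pos hl]
        have hkl' : (k:ℕ) < (a:ℕ) := by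
          subst hl
          rcases lt_or_eq_of_le hkl with h | h
          · rw [Fin.lt_def] at h; simpa using h
          · exact absurd h hk
        have := w_lt k hkl'
        rw [Fin.le_def]
        simp only [Fin.coe_castSucc]
        omega
      · rw [if_neg hk, if_neg hl]
        exact α.toOrderHom.monotone (Fin.predAbove_right_monotone a hkl)
    set α' : ⦋m+1⦌ ⟶ ⦋p+1⦌ := SimplexCategory.mkHom
      ⟨fun t => if t = a.castSucc then i.castSucc else α.toOrderHom (a.predAbove t), humono⟩
      with hα'
    have α'_apply : ∀ t : Fin (m+2), α'.toOrderHom t =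
        if t = a.castSucc then i.castSucc else α.toOrderHom (a.predAbove t) := fun _ => rfl
    set β' : ⦋m+1⦌ ⟶ ⦋n⦌ := SimplexCategory.σ a ≫ β with hβ'
    set x : X _⦋m+1⦌ := Fap X f α' β' with hx
    -- face relations
    have h1 : SimplexCategory.δ a.castSucc ≫ α' = α := by
      apply SimplexCategory.Hom.ext; apply OrderHom.ext; funext k
      rw [toOrderHom_comp_apply, α'_apply]
      have htv := delta_val a.castSucc k
      simp only [Fin.coe_castSucc] at htv
      rw [if_neg]
      · exact congrArg α.toOrderHom (Fin.ext (by rw [pred_val, htv]; split_ifs <;> omega))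
      · intro hcon
        have := congrArg Fin.val hcon
        simp only [Fin.coe_castSucc] at this
        rw [htv] at this
        split_ifs at this <;> omega
    have h1' : SimplexCategory.δ a.castSucc ≫ β' = β := by
      rw [hβ', ← Category.assoc, SimplexCategory.δ_comp_σ_self, Category.id_comp]
    have h4' : SimplexCategory.δ a.succ ≫ β' = β := by
      rw [hβ', ← Category.assoc, SimplexCategory.δ_comp_σ_succ, Category.id_comp]
    -- the elementary edge of x at a
    have hedge : elemEdge X x a = Fap X f
        (SimplexCategory.mkOfLe i.castSucc i.succ (Fin.castSucc_lt_succ (i := i)).le)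
        (SimplexCategory.const ⦋1⦌ ⦋n⦌ (β.toOrderHom a)) := by
      rw [hx]
      show X.map (SimplexCategory.mkOfLe a.castSucc a.succ (Fin.castSucc_lt_succ (i := a)).le).op
        (Fap X f α' β') = _
      rw [← Fap_natural]
      congr 1
      · apply hom1_ext
        · rw [toOrderHom_comp_apply, mkOfLe_val0, α'_apply, if_pos rfl, mkOfLe_val0]
        · rw [toOrderHom_comp_apply, mkOfLe_val1, α'_apply, if_neg, mkOfLe_val1]
          · have : a.predAbove a.succ = a := by
              apply Fin.ext; rw [pred_val]; simp only [Fin.val_succ]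
              split_ifs <;> omega
            rw [this, ha_mem]
          · intro hcon
            have := congrArg Fin.val hcon
            simp only [Fin.val_succ, Fin.coe_castSucc] at this
            omega
      · apply hom1_ext
        · rw [toOrderHom_comp_apply, mkOfLe_val0, hβ', toOrderHom_comp_apply]
          show β.toOrderHom (a.predAbove a.castSucc) = _
          have : a.predAbove a.castSucc = a := by
            apply Fin.ext; rw [pred_val]; simp
          rw [this]; rfl
        · rw [toOrderHom_comp_apply, mkOfLe_val1, hβ', toOrderHom_comp_apply]
          show β.toOrderHom (a.predAbove a.succ) = _
          have : a.predAbove a.succ = a := by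
            apply Fin.ext; rw [pred_val]; simp only [Fin.val_succ]
            split_ifs <;> omega
          rw [this]; rfl
    have hdeg : SDeg X (elemEdge X x a) := by rw [hedge]; exact H (β.toOrderHom a)
    obtain ⟨y, hy⟩ := hX m x a hdeg
    -- identities coming from regularity
    have e1 : Fap X f α β = X.map (SimplexCategory.δ a.castSucc).op x := by
      rw [hx, ← Fap_natural, h1, h1']
    have e2 : X.map (SimplexCategory.δ a.castSucc).op x = y := by
      rw [hy, ← FunctorToTypes.map_comp_apply, ← op_comp, SimplexCategory.δ_comp_σ_self,
        op_id, FunctorToTypes.map_id_apply]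
    have e3 : X.map (SimplexCategory.δ a.succ).op x = y := by
      rw [hy, ← FunctorToTypes.map_comp_apply, ← op_comp, SimplexCategory.δ_comp_σ_succ,
        op_id, FunctorToTypes.map_id_apply]
    set α₂ : ⦋m⦌ ⟶ ⦋p+1⦌ := SimplexCategory.δ a.succ ≫ α' with hα₂
    have e4 : Fap X f α₂ β = X.map (SimplexCategory.δ a.succ).op x := by
      rw [hx, ← Fap_natural, h4']
    -- value description of α₂
    have hval₂ : ∀ k : Fin (m+1), ((α₂.toOrderHom k : Fin (p+2)) : ℕ) =
        if (k:ℕ) = (a:ℕ) then (i:ℕ) else ((α.toOrderHom k : Fin (p+2)) : ℕ) := by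
      intro k
      rw [hα₂, toOrderHom_comp_apply, α'_apply]
      have htv := delta_val a.succ k
      simp only [Fin.val_succ] at htv
      by_cases hk : (k:ℕ) = (a:ℕ)
      · rw [if_pos, if_pos hk]
        · rfl
        · apply Fin.ext
          simp only [Fin.coe_castSucc]
          rw [htv]
          split_ifs <;> omega
      · rw [if_neg, if_neg hk]
        · exact congrArg (fun z => ((α.toOrderHom z : Fin (p+2)) : ℕ))
            (Fin.ext (by rw [pred_val, htv]; split_ifs <;> omega))
        · intro hcon
          have := congrArg Fin.val hcon
          simp only [Fin.coe_castSucc] at this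
          rw [htv] at this
          split_ifs at this <;> omega
    -- the count decreases
    have hsub : (Finset.univ.filter (fun k : Fin (m+1) => α₂.toOrderHom k = i.succ)) ⊆
        S.erase a := by
      intro k hk
      simp only [Finset.mem_filter, Finset.mem_univ, true_and] at hk
      have hkv := congrArg Fin.val hk
      rw [hval₂, Fin.val_succ] at hkv
      have hka : (k:ℕ) ≠ (a:ℕ) := by
        intro hcon; rw [if_pos hcon] at hkv; omega
      rw [if_neg hka] at hkv
      rw [Finset.mem_erase]
      constructor
      · intro hcon; exact hka (congrArg Fin.val hcon)
      · rw [hS]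
        simp only [Finset.mem_filter, Finset.mem_univ, true_and]
        apply Fin.ext
        rw [hkv, Fin.val_succ]
    have haS : a ∈ S := S.min'_mem hSne
    have hcard : (Finset.univ.filter (fun k : Fin (m+1) => α₂.toOrderHom k = i.succ)).card < c := by
      calc _ ≤ (S.erase a).card := Finset.card_le_card hsub
        _ = S.card - 1 := Finset.card_erase_of_mem haS
        _ < c := by rw [hc]; omega
    have hIH := IH _ hcard α₂ rfl
    -- α₂ ≫ r = α ≫ r
    have hcomp : α₂ ≫ (SimplexCategory.σ i ≫ SimplexCategory.δ i.succ) =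
        α ≫ (SimplexCategory.σ i ≫ SimplexCategory.δ i.succ) := by
      apply SimplexCategory.Hom.ext; apply OrderHom.ext; funext k
      apply Fin.ext
      show ((((SimplexCategory.σ i ≫ SimplexCategory.δ i.succ)).toOrderHom
          (α₂.toOrderHom k) : Fin (p+2)) : ℕ) =
        (((SimplexCategory.σ i ≫ SimplexCategory.δ i.succ).toOrderHom
          (α.toOrderHom k) : Fin (p+2)) : ℕ)
      rw [r_val, r_val, hval₂ k]
      by_cases hk : (k:ℕ) = (a:ℕ)
      · rw [if_pos hk]
        have : ((α.toOrderHom k : Fin (p+2)) : ℕ) = (i:ℕ) + 1 := by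
          have : α.toOrderHom k = i.succ := by
            apply Fin.ext ∘ fun h => h
            exact (by rw [show k = a from Fin.ext hk, ha_mem, Fin.val_succ] :
              ((α.toOrderHom k : Fin (p+2)) : ℕ) = (i:ℕ) + 1)
          rw [this, Fin.val_succ]
        rw [if_pos this]
        rw [if_neg (by omega)]
      · rw [if_neg hk]
    rw [hcomp] at hIH
    rw [hIH, e4, e3, e1, e2]

end Aux

/-- If `X` is regular of dimension `≤ q`, then `Hom(Δ[n], X)` has dimension
at most `(n+1)·q`. -/
theorem stmt_15 (X : SSet.{u}) (hX : SReg X) (q : ℕ)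
    (hq : ∀ (m : ℕ) (x : X _⦋m + 1⦌), q < m + 1 → SDeg X x) (n : ℕ) :
    ∀ (p : ℕ) (f : (sHom Δ[n] X) _⦋p + 1⦌), (n + 1) * q < p + 1 →
      SDeg (sHom Δ[n] X) f := by
  intro p f hpq
  classical
  let f' : Δ[p+1] ⊗ Δ[n] ⟶ X := f
  -- the rows
  let y : Fin (n+1) → X _⦋p+1⦌ := fun j =>
    Fap X f' (𝟙 ⦋p+1⦌) (SimplexCategory.const ⦋p+1⦌ ⦋n⦌ j)
  have hedge : ∀ (j : Fin (n+1)) (i : Fin (p+1)), elemEdge X (y j) i =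
      Fap X f' (SimplexCategory.mkOfLe i.castSucc i.succ (Fin.castSucc_lt_succ (i := i)).le)
        (SimplexCategory.const ⦋1⦌ ⦋n⦌ j) := by
    intro j i
    show X.map (SimplexCategory.mkOfLe i.castSucc i.succ (Fin.castSucc_lt_succ (i := i)).le).op
      (Fap X f' (𝟙 ⦋p+1⦌) (SimplexCategory.const ⦋p+1⦌ ⦋n⦌ j)) = _
    rw [← Fap_natural]
    congr 1
  -- pigeonhole
  let B : Finset (Fin (p+1)) := Finset.univ.biUnion (fun j : Fin (n+1) => badSet X (y j))
  have hBcard : B.card ≤ (n+1) * q := by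
    calc B.card ≤ ∑ j : Fin (n+1), (badSet X (y j)).card := Finset.card_biUnion_le
      _ ≤ ∑ _j : Fin (n+1), q :=
        Finset.sum_le_sum (fun j _ => badSet_card_le X q hq (p+1) (y j))
      _ = (n+1) * q := by simp [Finset.sum_const, mul_comm]
  have hex : ∃ i : Fin (p+1), i ∉ B := by
    by_contra hcon
    push_neg at hcon
    have : (Finset.univ : Finset (Fin (p+1))) ⊆ B := fun i _ => hcon i
    have := Finset.card_le_card this
    simp only [Finset.card_univ, Fintype.card_fin] at this
    omega
  obtain ⟨i, hi⟩ := hex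
  have H : ∀ j : Fin (n+1), SDeg X (Fap X f'
      (SimplexCategory.mkOfLe i.castSucc i.succ (Fin.castSucc_lt_succ (i := i)).le)
      (SimplexCategory.const ⦋1⦌ ⦋n⦌ j)) := by
    intro j
    have : i ∉ badSet X (y j) := fun hmem =>
      hi (Finset.mem_biUnion.2 ⟨j, Finset.mem_univ _, hmem⟩)
    rw [mem_badSet, not_not] at this
    rw [← hedge]
    exact this
  have hkey := key X hX f' i H
  show ∃ (i : Fin (p+1)) (g : (sHom Δ[n] X) _⦋p⦌), f = (sHom Δ[n] X).map (SimplexCategory.σ i).op g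
  refine ⟨i, (SSet.stdSimplex.map (SimplexCategory.δ i.succ) ▷ Δ[n]) ≫ f', ?_⟩
  show f' = (SSet.stdSimplex.map (SimplexCategory.σ i) ▷ Δ[n]) ≫
    (SSet.stdSimplex.map (SimplexCategory.δ i.succ) ▷ Δ[n]) ≫ f'
  apply SSet.hom_ext
  intro mm
  apply ConcreteCategory.hom_ext; intro s
  exact (hkey mm.unop.len (SSet.stdSimplex.objEquiv s.1)
    (SSet.stdSimplex.objEquiv s.2)).symm
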